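/- Let f : ℝ → ℝ be a differentiable probability density on ℝ (f ≥ 0 and ∫_ℝ f(x) dx = 1) such that x ↦ x·f(x) is Lebesgue integrable, and set μ = ∫_ℝ x·f(x) dx. Assume that x ↦ (x − μ)·f'(x) is Lebesgue integrable on ℝ and that (x − μ)·f(x) → 0 as x → +∞ and as x → −∞. Then ∫_ℝ |(x − μ) · f'(x)| dx ≥ 1. -/

import Mathlib

open MeasureTheory Real Filter

/-- lower bound for the score-times-deviation integral of a density.
If `f` is a differentiable probability density on `ℝ` with mean `μ`, `(x - μ) f'(x)` is
integrable, and `(x - μ) f(x) → 0` as `x → ±∞`, then `∫ |(x - μ) f'(x)| dx ≥ 1`. -/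
theorem score_deviation_lower_bound (f : ℝ → ℝ)
    (hnonneg : ∀ x, 0 ≤ f x) (hdiff : Differentiable ℝ f)
    (hdens : ∫ x, f x = 1)
    (hxf : Integrable (fun x => x * f x))
    (μ : ℝ) (hμ : μ = ∫ x, x * f x)
    (hint : Integrable (fun x => (x - μ) * deriv f x))
    (htop : Tendsto (fun x => (x - μ) * f x) atTop (nhds 0))
    (hbot : Tendsto (fun x => (x - μ) * f x) atBot (nhds 0)) :
    1 ≤ ∫ x, |(x - μ) * deriv f x| := by
  have hf : Integrable f := by
    by_contra h
    rw [integral_undef h] at hdens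
    norm_num at hdens
  have hg' : Integrable (fun x => f x + (x - μ) * deriv f x) := hf.add hint
  have hderiv : ∀ x, HasDerivAt (fun x => (x - μ) * f x)
      (f x + (x - μ) * deriv f x) x := by
    intro x
    have h1 : HasDerivAt (fun x : ℝ => x - μ) 1 x :=
      (hasDerivAt_id x).sub_const μ
    have h2 : HasDerivAt f (deriv f x) x := (hdiff x).hasDerivAt
    have h3 := h1.mul h2; rw [one_mul] at h3; exact h3
  have key : ∫ x, (f x + (x - μ) * deriv f x) = 0 := by
    simpa using integral_of_hasDerivAt_of_tendsto hderiv hg' hbot htop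
  rw [integral_add hf hint, hdens] at key
  have heq : ∫ x, (x - μ) * deriv f x = -1 := by linarith
  calc (1 : ℝ) = |∫ x, (x - μ) * deriv f x| := by rw [heq]; norm_num
    _ ≤ ∫ x, |(x - μ) * deriv f x| := by
        simpa only [Real.norm_eq_abs] using norm_integral_le_integral_norm (μ := volume) (f := fun x => (x - μ) * deriv f x)
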